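/- If real numbers λ₁ ≥ ... ≥ λₙ satisfy ∑ᵢ arctan(λᵢ) ≥ (n-2)·π/2, then the elementary symmetric polynomial σ_k(λ₁,...,λₙ) is nonnegative for all 1 ≤ k ≤ n-1. -/

import Mathlib

open Real Finset

/-- Subadditivity of arctan on nonnegative reals. -/
lemma my_arctan_add_le {x y : ℝ} (hx : 0 ≤ x) (hy : 0 ≤ y) :
    Real.arctan (x + y) ≤ Real.arctan x + Real.arctan y := by
  rcases lt_or_ge (x * y) 1 with h | h
  · rw [Real.arctan_add h]
    apply Real.arctan_strictMono.monotone
    rw [le_div_iff₀ (by nlinarith)]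
    nlinarith [mul_nonneg (mul_nonneg hx hy) (add_nonneg hx hy)]
  · have hx0 : 0 < x := by nlinarith
    have hxy : x⁻¹ ≤ y := by
      rw [inv_eq_one_div, div_le_iff₀ hx0]
      nlinarith
    refine le_of_lt ?_
    calc Real.arctan (x + y) < π / 2 := Real.arctan_lt_pi_div_two _
      _ = Real.arctan x + Real.arctan x⁻¹ := by
          rw [Real.arctan_inv_of_pos hx0]; ring
      _ ≤ Real.arctan x + Real.arctan y :=
          add_le_add (le_refl _) (Real.arctan_strictMono.monotone hxy)

/-- Subadditivity of arctan for finite sums of nonnegative reals. -/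
lemma my_arctan_sum_le {ι : Type*} (s : Finset ι) (f : ι → ℝ) (hf : ∀ i ∈ s, 0 ≤ f i) :
    Real.arctan (∑ i ∈ s, f i) ≤ ∑ i ∈ s, Real.arctan (f i) := by
  induction s using Finset.cons_induction with
  | empty => simp
  | cons a s ha ih =>
    rw [Finset.sum_cons, Finset.sum_cons]
    have h1 : 0 ≤ ∑ i ∈ s, f i :=
      Finset.sum_nonneg fun i hi => hf i (Finset.mem_cons_of_mem hi)
    calc Real.arctan (f a + ∑ i ∈ s, f i)
        ≤ Real.arctan (f a) + Real.arctan (∑ i ∈ s, f i) :=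
          my_arctan_add_le (hf a (Finset.mem_cons_self a s)) h1
      _ ≤ _ := add_le_add (le_refl _) (ih fun i hi => hf i (Finset.mem_cons_of_mem hi))

lemma my_esymm_nonneg {ι : Type*} (s : Finset ι) (k : ℕ) (f : ι → ℝ)
    (hf : ∀ i ∈ s, 0 ≤ f i) :
    0 ≤ ∑ T ∈ Finset.powersetCard k s, ∏ i ∈ T, f i :=
  Finset.sum_nonneg fun T hT =>
    Finset.prod_nonneg fun i hi => hf i ((Finset.mem_powersetCard.mp hT).1 hi)

lemma my_esymm_insert {ι : Type*} [DecidableEq ι] {a : ι} {s : Finset ι} (ha : a ∉ s)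
    (k : ℕ) (f : ι → ℝ) :
    ∑ T ∈ Finset.powersetCard (k + 1) (insert a s), ∏ i ∈ T, f i
      = (∑ T ∈ Finset.powersetCard (k + 1) s, ∏ i ∈ T, f i)
        + f a * ∑ T ∈ Finset.powersetCard k s, ∏ i ∈ T, f i := by
  have hdis : Disjoint (Finset.powersetCard (k + 1) s)
      ((Finset.powersetCard k s).image (insert a)) := by
    rw [Finset.disjoint_left]
    intro T hT hT'
    obtain ⟨u, hu, rfl⟩ := Finset.mem_image.mp hT'
    have hTs := (Finset.mem_powersetCard.mp hT).1
    exact ha (hTs (Finset.mem_insert_self a u))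
  rw [Finset.powersetCard_succ_insert ha, Finset.sum_union hdis]
  congr 1
  rw [Finset.sum_image, Finset.mul_sum]
  · apply Finset.sum_congr rfl
    intro T hT
    have haT : a ∉ T := fun h => ha ((Finset.mem_powersetCard.mp hT).1 h)
    rw [Finset.prod_insert haT]
  · intro u hu v hv huv
    have hau : a ∉ u := fun h => ha ((Finset.mem_powersetCard.mp hu).1 h)
    have hav : a ∉ v := fun h => ha ((Finset.mem_powersetCard.mp hv).1 h)
    rw [← Finset.erase_insert hau, ← Finset.erase_insert hav, huv]

lemma my_esymm_compl {ι : Type*} [DecidableEq ι] (s : Finset ι) (k : ℕ) (hk : k ≤ s.card)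
    (f : ι → ℝ) (hf : ∀ i ∈ s, f i ≠ 0) :
    ∑ T ∈ Finset.powersetCard k s, ∏ i ∈ T, f i
      = (∏ i ∈ s, f i) *
        ∑ T ∈ Finset.powersetCard (s.card - k) s, ∏ i ∈ T, (f i)⁻¹ := by
  rw [Finset.mul_sum]
  refine Finset.sum_nbij' (i := fun T => s \ T) (j := fun T => s \ T) ?_ ?_ ?_ ?_ ?_
  · intro T hT
    obtain ⟨hTs, hTc⟩ := Finset.mem_powersetCard.mp hT
    exact Finset.mem_powersetCard.mpr ⟨Finset.sdiff_subset, by rw [Finset.card_sdiff_of_subset hTs, hTc]⟩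
  · intro T hT
    obtain ⟨hTs, hTc⟩ := Finset.mem_powersetCard.mp hT
    refine Finset.mem_powersetCard.mpr ⟨Finset.sdiff_subset, ?_⟩
    rw [Finset.card_sdiff_of_subset hTs, hTc]
    omega
  · intro T hT
    exact Finset.sdiff_sdiff_eq_self (Finset.mem_powersetCard.mp hT).1
  · intro T hT
    exact Finset.sdiff_sdiff_eq_self (Finset.mem_powersetCard.mp hT).1
  · intro T hT
    have hTs := (Finset.mem_powersetCard.mp hT).1
    have h1 : ∏ i ∈ s \ T, f i * (f i)⁻¹ = 1 :=
      Finset.prod_eq_one fun i hi => mul_inv_cancel₀ (hf i (Finset.mem_sdiff.mp hi).1)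
    calc ∏ i ∈ T, f i = (∏ i ∈ T, f i) * ∏ i ∈ s \ T, f i * (f i)⁻¹ := by rw [h1, mul_one]
      _ = ((∏ i ∈ s \ T, f i) * ∏ i ∈ T, f i) * ∏ i ∈ s \ T, (f i)⁻¹ := by
          rw [Finset.prod_mul_distrib]; ring
      _ = (∏ i ∈ s, f i) * ∏ i ∈ s \ T, (f i)⁻¹ := by rw [Finset.prod_sdiff hTs]

lemma my_esymm_one {ι : Type*} (s : Finset ι) (f : ι → ℝ) :
    ∑ T ∈ Finset.powersetCard 1 s, ∏ i ∈ T, f i = ∑ i ∈ s, f i := by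
  rw [Finset.powersetCard_one, Finset.sum_map]
  simp

lemma my_esymm_succ_le {ι : Type*} [DecidableEq ι] (s : Finset ι) (j : ℕ) (f : ι → ℝ)
    (hf : ∀ i ∈ s, 0 ≤ f i) :
    ∑ T ∈ Finset.powersetCard (j + 1) s, ∏ i ∈ T, f i
      ≤ (∑ i ∈ s, f i) * ∑ T ∈ Finset.powersetCard j s, ∏ i ∈ T, f i := by
  induction s using Finset.cons_induction generalizing j with
  | empty =>
    rw [Finset.powersetCard_eq_empty.mpr (by simp)]
    simp
  | cons a s ha ih =>
    have hfa : 0 ≤ f a := hf a (Finset.mem_cons_self a s)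
    have hfs : ∀ i ∈ s, 0 ≤ f i := fun i hi => hf i (Finset.mem_cons_of_mem hi)
    have hS : 0 ≤ ∑ i ∈ s, f i := Finset.sum_nonneg hfs
    rw [Finset.cons_eq_insert, my_esymm_insert ha, Finset.sum_insert ha]
    match j with
    | 0 =>
      have h0 : ∑ T ∈ Finset.powersetCard 0 (insert a s), ∏ i ∈ T, f i = 1 := by
        rw [Finset.powersetCard_zero]; simp
      have h0' : ∑ T ∈ Finset.powersetCard 0 s, ∏ i ∈ T, f i = 1 := by
        rw [Finset.powersetCard_zero]; simp
      simp only [Nat.zero_add]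
      rw [h0, h0', mul_one, my_esymm_one]
      linarith
    | j + 1 =>
      rw [my_esymm_insert ha]
      have hA := ih (j + 1) hfs
      have hB : 0 ≤ ∑ T ∈ Finset.powersetCard (j + 1) s, ∏ i ∈ T, f i :=
        my_esymm_nonneg s (j + 1) f hfs
      have hC : 0 ≤ ∑ T ∈ Finset.powersetCard j s, ∏ i ∈ T, f i :=
        my_esymm_nonneg s j f hfs
      nlinarith [mul_nonneg (mul_nonneg hfa hfa) hC, mul_nonneg (mul_nonneg hS hfa) hC]

/-- If `λ₁ ≥ ... ≥ λₙ` satisfy `∑ arctan λᵢ ≥ (n-2)π/2`, then the elementary symmetric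
polynomials `σ_k(λ)` are nonnegative for `1 ≤ k ≤ n-1`. -/
theorem stmt_4 (n : ℕ) (hn : 2 ≤ n) (lam : Fin n → ℝ)
    (hmono : ∀ i j : Fin n, i ≤ j → lam j ≤ lam i)
    (hsum : ((n : ℝ) - 2) * (Real.pi / 2) ≤ ∑ i, Real.arctan (lam i)) :
    ∀ k : ℕ, 1 ≤ k → k ≤ n - 1 →
      0 ≤ ∑ s ∈ Finset.powersetCard k (Finset.univ : Finset (Fin n)), ∏ i ∈ s, lam i := by
  have hn0 : 0 < n := by omega
  set N : Fin n := ⟨n - 1, by omega⟩ with hN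
  have hleN : ∀ i : Fin n, i ≤ N := by
    intro i
    have h := i.isLt
    rw [Fin.le_def]
    show i.val ≤ n - 1
    omega
  rcases le_or_gt 0 (lam N) with hpos | hneg
  · -- all entries are nonnegative
    intro k _ _
    exact my_esymm_nonneg _ _ _ fun i _ => le_trans hpos (hmono i N (hleN i))
  · -- lam N < 0
    set b : ℝ := -lam N with hbdef
    have hb0 : 0 < b := by simp [hbdef]; linarith
    set s : Finset (Fin n) := Finset.univ.erase N with hs
    have hNs : N ∉ s := Finset.notMem_erase N _
    have hcard : s.card = n - 1 := by
      rw [hs, Finset.card_erase_of_mem (Finset.mem_univ N), Finset.card_univ,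
        Fintype.card_fin]
    have huniv : (Finset.univ : Finset (Fin n)) = insert N s :=
      (Finset.insert_erase (Finset.mem_univ N)).symm
    -- each lam i for i ∈ s satisfies b ≤ lam i
    have hge : ∀ i ∈ s, b ≤ lam i := by
      intro i hi
      have hiN : i ≠ N := Finset.ne_of_mem_erase hi
      have h1 : ∑ j, Real.arctan (lam j)
          = Real.arctan (lam i) + Real.arctan (lam N)
            + ∑ j ∈ (Finset.univ.erase i).erase N, Real.arctan (lam j) := by
        rw [← Finset.add_sum_erase _ _ (Finset.mem_univ i)]
        have hNmem : N ∈ Finset.univ.erase i :=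
          Finset.mem_erase.mpr ⟨Ne.symm hiN, Finset.mem_univ N⟩
        rw [← Finset.add_sum_erase _ _ hNmem]
        ring
      have h2 : ∑ j ∈ (Finset.univ.erase i).erase N, Real.arctan (lam j)
          ≤ ((n : ℝ) - 2) * (π / 2) := by
        have hc : ((Finset.univ.erase i).erase N).card = n - 2 := by
          rw [Finset.card_erase_of_mem
            (Finset.mem_erase.mpr ⟨Ne.symm hiN, Finset.mem_univ N⟩),
            Finset.card_erase_of_mem (Finset.mem_univ i), Finset.card_univ,
            Fintype.card_fin]
          omega
        calc ∑ j ∈ (Finset.univ.erase i).erase N, Real.arctan (lam j)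
            ≤ ∑ _j ∈ (Finset.univ.erase i).erase N, (π / 2) :=
              Finset.sum_le_sum fun j _ => le_of_lt (Real.arctan_lt_pi_div_two _)
          _ = ((n : ℝ) - 2) * (π / 2) := by
              rw [Finset.sum_const, hc, nsmul_eq_mul]
              congr 1
              push_cast [Nat.cast_sub hn]
              ring
      have h3 : 0 ≤ Real.arctan (lam i) + Real.arctan (lam N) := by linarith
      have h4 : Real.arctan b ≤ Real.arctan (lam i) := by
        rw [hbdef, Real.arctan_neg]
        linarith
      exact Real.arctan_strictMono.le_iff_le.mp h4
    have hlampos : ∀ i ∈ s, 0 < lam i := fun i hi => lt_of_lt_of_le hb0 (hge i hi)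
    -- Step B : ∑_{i ∈ s} arctan (lam i)⁻¹ ≤ arctan b⁻¹
    have hsum_s : ((n : ℝ) - 2) * (π / 2) + Real.arctan b
        ≤ ∑ i ∈ s, Real.arctan (lam i) := by
      have : ∑ i, Real.arctan (lam i)
          = Real.arctan (lam N) + ∑ i ∈ s, Real.arctan (lam i) := by
        rw [hs, ← Finset.add_sum_erase _ _ (Finset.mem_univ N)]
      rw [hbdef, Real.arctan_neg]
      linarith
    have hkey : ∑ i ∈ s, Real.arctan (lam i)⁻¹ ≤ Real.arctan b⁻¹ := by
      have hinv : ∑ i ∈ s, Real.arctan (lam i)⁻¹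
          = ∑ i ∈ s, (π / 2 - Real.arctan (lam i)) :=
        Finset.sum_congr rfl fun i hi => Real.arctan_inv_of_pos (hlampos i hi)
      rw [hinv, Finset.sum_sub_distrib, Finset.sum_const, hcard, nsmul_eq_mul,
        Real.arctan_inv_of_pos hb0]
      have hc : ((n - 1 : ℕ) : ℝ) = (n : ℝ) - 1 := by
        push_cast [Nat.cast_sub (by omega : 1 ≤ n)]; ring
      rw [hc]
      linarith
    -- Step C : b * ∑ (lam i)⁻¹ ≤ 1
    have hinvnonneg : ∀ i ∈ s, 0 ≤ (lam i)⁻¹ :=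
      fun i hi => inv_nonneg.mpr (le_of_lt (hlampos i hi))
    have hs1 : b * (∑ i ∈ s, (lam i)⁻¹) ≤ 1 := by
      have h5 : Real.arctan (∑ i ∈ s, (lam i)⁻¹) ≤ Real.arctan b⁻¹ :=
        le_trans (my_arctan_sum_le s _ hinvnonneg) hkey
      have h6 : ∑ i ∈ s, (lam i)⁻¹ ≤ b⁻¹ := Real.arctan_strictMono.le_iff_le.mp h5
      calc b * (∑ i ∈ s, (lam i)⁻¹) ≤ b * b⁻¹ :=
            mul_le_mul_of_nonneg_left h6 (le_of_lt hb0)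
        _ = 1 := mul_inv_cancel₀ (ne_of_gt hb0)
    -- main computation
    intro k hk1 hk2
    obtain ⟨k', rfl⟩ : ∃ k', k = k' + 1 := ⟨k - 1, by omega⟩
    rw [huniv, my_esymm_insert hNs]
    have hm : k' + 1 ≤ s.card := by omega
    have hm' : k' ≤ s.card := by omega
    have hfne : ∀ i ∈ s, lam i ≠ 0 := fun i hi => ne_of_gt (hlampos i hi)
    rw [my_esymm_compl s (k' + 1) hm lam hfne, my_esymm_compl s k' hm' lam hfne]
    set x : Fin n → ℝ := fun i => (lam i)⁻¹ with hx
    set j : ℕ := s.card - (k' + 1) with hj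
    have hjj : s.card - k' = j + 1 := by omega
    rw [hjj]
    set P : ℝ := ∏ i ∈ s, lam i with hP
    have hPpos : 0 < P := Finset.prod_pos hlampos
    have hEj : 0 ≤ ∑ T ∈ Finset.powersetCard j s, ∏ i ∈ T, x i :=
      my_esymm_nonneg s j x hinvnonneg
    have hstep : b * ∑ T ∈ Finset.powersetCard (j + 1) s, ∏ i ∈ T, x i
        ≤ ∑ T ∈ Finset.powersetCard j s, ∏ i ∈ T, x i := by
      calc b * ∑ T ∈ Finset.powersetCard (j + 1) s, ∏ i ∈ T, x i
          ≤ b * ((∑ i ∈ s, x i) * ∑ T ∈ Finset.powersetCard j s, ∏ i ∈ T, x i) :=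
            mul_le_mul_of_nonneg_left (my_esymm_succ_le s j x hinvnonneg) (le_of_lt hb0)
        _ = (b * ∑ i ∈ s, x i) * ∑ T ∈ Finset.powersetCard j s, ∏ i ∈ T, x i := by ring
        _ ≤ 1 * ∑ T ∈ Finset.powersetCard j s, ∏ i ∈ T, x i :=
            mul_le_mul_of_nonneg_right hs1 hEj
        _ = ∑ T ∈ Finset.powersetCard j s, ∏ i ∈ T, x i := one_mul _
    have hlamN : lam N = -b := by rw [hbdef]; ring
    rw [hlamN]
    nlinarith [hstep, hPpos, hEj]
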